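/- arXiv:0912.2952 — 2 statements merged into one kernel-verified Lean document; each statement's English description precedes it below -/
import Mathlib

section
/- The protected exponentiation of Figure 2 runs for exactly m + H(d) loop iterations, where H(d) is the hamming weight of the key: starting with i = m−1, k = 0, and updating k := k XOR d[i], i := i − (if k then 0 else 1) each iteration, the loop guard i ≥ 0 becomes false after exactly m + (number of indices with d[i] = true) iterations. -/
/-- One iteration of the protected exponentiation loop of Figure 2, acting on
the loop state `(i, k)`: `k := k XOR d[i]`, `i := i − (if k then 0 else 1)`. -/
def protStep (m : ℕ) (d : Fin m → Bool) (p : ℤ × Bool) : ℤ × Bool :=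
  let i := p.1
  let k := p.2
  let k' := xor k (if h : 0 ≤ i ∧ i < (m : ℤ) then d ⟨i.toNat, by omega⟩ else false)
  (if k' then i else i - 1, k')

def hammingWeight {m : ℕ} (d : Fin m → Bool) : ℕ :=
  (Finset.univ.filter (fun i => d i = true)).card

def cnt (m : ℕ) (d : Fin m → Bool) (j : ℕ) : ℕ :=
  (m - j) + (Finset.univ.filter (fun i : Fin m => d i = true ∧ j ≤ (i : ℕ))).card

lemma cnt_zero (m : ℕ) (d : Fin m → Bool) : cnt m d 0 = m + hammingWeight d := by
  simp [cnt, hammingWeight]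

lemma cnt_m (m : ℕ) (d : Fin m → Bool) : cnt m d m = 0 := by
  have h : (Finset.univ.filter (fun i : Fin m => d i = true ∧ m ≤ (i : ℕ))) = ∅ := by
    ext i
    simp only [Finset.mem_filter, Finset.mem_univ, true_and, Finset.notMem_empty, iff_false,
      not_and]
    intro _
    exact Nat.not_le.mpr i.isLt
  simp [cnt, h]

lemma cnt_step (m : ℕ) (d : Fin m → Bool) (j : ℕ) (hj : j < m) :
    cnt m d j = cnt m d (j+1) + (if d ⟨j, hj⟩ then 2 else 1) := by
  have hsplit : (Finset.univ.filter (fun i : Fin m => d i = true ∧ j ≤ (i : ℕ))).card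
      = (Finset.univ.filter (fun i : Fin m => d i = true ∧ j+1 ≤ (i : ℕ))).card
        + (if d ⟨j, hj⟩ then 1 else 0) := by
    by_cases hd : d ⟨j, hj⟩ = true
    · rw [if_pos hd]
      have hset : (Finset.univ.filter (fun i : Fin m => d i = true ∧ j ≤ (i : ℕ)))
          = insert ⟨j, hj⟩ (Finset.univ.filter (fun i : Fin m => d i = true ∧ j+1 ≤ (i : ℕ))) := by
        ext i
        simp only [Finset.mem_filter, Finset.mem_insert, Finset.mem_univ, true_and]
        constructor
        · rintro ⟨h1, h2⟩
          rcases eq_or_lt_of_le h2 with h | h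
          · left; exact Fin.ext h.symm
          · right; exact ⟨h1, h⟩
        · rintro (rfl | ⟨h1, h2⟩)
          · exact ⟨hd, le_refl _⟩
          · exact ⟨h1, by omega⟩
      rw [hset, Finset.card_insert_of_notMem (by simp)]
    · rw [if_neg hd]
      have hset : (Finset.univ.filter (fun i : Fin m => d i = true ∧ j ≤ (i : ℕ)))
          = (Finset.univ.filter (fun i : Fin m => d i = true ∧ j+1 ≤ (i : ℕ))) := by
        ext i
        simp only [Finset.mem_filter, Finset.mem_univ, true_and, and_congr_right_iff]
        intro h1
        constructor
        · intro h2
          rcases eq_or_lt_of_le h2 with h | h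
          · exfalso; apply hd; have hij : i = ⟨j, hj⟩ := Fin.ext h.symm; rwa [hij] at h1
          · exact h
        · omega
      rw [hset]
      omega
  unfold cnt
  rw [hsplit]
  by_cases hd : d ⟨j, hj⟩ = true <;> simp [hd] <;> omega

lemma step_false (m : ℕ) (d : Fin m → Bool) (j : ℕ) (hj : j < m) :
    protStep m d ((j : ℤ), false)
      = (if d ⟨j, hj⟩ then ((j : ℤ), true) else ((j : ℤ) - 1, false)) := by
  have h : (0 : ℤ) ≤ (j : ℤ) ∧ (j : ℤ) < (m : ℤ) := ⟨by positivity, by exact_mod_cast hj⟩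
  simp only [protStep, dif_pos h]
  have hfin : (⟨(j : ℤ).toNat, by omega⟩ : Fin m) = ⟨j, hj⟩ := Fin.mk_eq_mk.mpr (by omega)
  rw [hfin]
  cases hd : d ⟨j, hj⟩ <;> simp [hd]

lemma step_true (m : ℕ) (d : Fin m → Bool) (j : ℕ) (hj : j < m) (hd : d ⟨j, hj⟩ = true) :
    protStep m d ((j : ℤ), true) = ((j : ℤ) - 1, false) := by
  have h : (0 : ℤ) ≤ (j : ℤ) ∧ (j : ℤ) < (m : ℤ) := ⟨by positivity, by exact_mod_cast hj⟩
  simp only [protStep, dif_pos h]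
  have hfin : (⟨(j : ℤ).toNat, by omega⟩ : Fin m) = ⟨j, hj⟩ := Fin.mk_eq_mk.mpr (by omega)
  rw [hfin]
  simp [hd]

lemma main_ind (m : ℕ) (d : Fin m → Bool) :
    ∀ t, t ≤ m →
      (protStep m d)^[cnt m d (m - t)] (((m : ℤ) - 1, false)) = ((m : ℤ) - t - 1, false)
      ∧ ∀ n < cnt m d (m - t), 0 ≤ ((protStep m d)^[n] (((m : ℤ) - 1, false))).1 := by
  intro t
  induction t with
  | zero =>
    intro _
    constructor
    · simp [cnt_m]
    · rw [Nat.sub_zero, cnt_m]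
      intro n hn
      omega
  | succ t ih =>
    intro ht
    have ht' : t ≤ m := by omega
    obtain ⟨hstate, hnn⟩ := ih ht'
    set j := m - (t+1) with hjdef
    have hj : j < m := by omega
    have hmt : m - t = j + 1 := by omega
    have hcast : (m : ℤ) - t - 1 = (j : ℤ) := by push_cast; omega
    rw [hmt, hcast] at hstate
    have hcast2 : (m : ℤ) - (t+1 : ℕ) - 1 = (j : ℤ) - 1 := by push_cast; omega
    have hcnt := cnt_step m d j hj
    have key : ∀ s, (protStep m d)^[cnt m d (j+1) + s] (((m : ℤ) - 1, false))
        = (protStep m d)^[s] (((j : ℤ), false)) := by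
      intro s
      rw [Nat.add_comm, Function.iterate_add_apply, hstate]
    constructor
    · rw [hcast2]
      by_cases hd : d ⟨j, hj⟩ = true
      · rw [hcnt, if_pos hd, key 2]
        have h1 : (protStep m d)^[2] (((j : ℤ), false))
            = protStep m d (protStep m d (((j : ℤ), false))) := by
          simp [Function.iterate_succ_apply']
        rw [h1, step_false m d j hj, if_pos hd, step_true m d j hj hd]
      · rw [hcnt, if_neg hd, key 1]
        simp only [Function.iterate_one]
        rw [step_false m d j hj, if_neg hd]
    · intro n hn
      by_cases hn' : n < cnt m d (j+1)
      · exact hnn n (by rwa [hmt])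
      · have hge : cnt m d (j+1) ≤ n := le_of_not_gt hn'
        obtain ⟨s, rfl⟩ := Nat.exists_eq_add_of_le hge
        rw [key s]
        rw [hcnt] at hn
        by_cases hd : d ⟨j, hj⟩ = true
        · rw [if_pos hd] at hn
          have hs : s < 2 := by omega
          interval_cases s
          · simpa using Int.ofNat_nonneg j
          · rw [Function.iterate_one, step_false m d j hj, if_pos hd]
            simpa using Int.ofNat_nonneg j
        · rw [if_neg hd] at hn
          have hs : s < 1 := by omega
          interval_cases s
          · simpa using Int.ofNat_nonneg j

/-- The protected exponentiation runs for exactly `m + H(d)` iterations: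
starting from `(m−1, false)`, the index stays nonnegative for the first
`m + H(d)` states and is negative after `m + H(d)` iterations. -/
theorem protected_exponentiation_iterations (m : ℕ) (d : Fin m → Bool) :
    (∀ n < m + hammingWeight d,
        0 ≤ ((protStep m d)^[n] (((m : ℤ) - 1, false))).1) ∧
    ((protStep m d)^[m + hammingWeight d] (((m : ℤ) - 1, false))).1 < 0 := by
  obtain ⟨h1, h2⟩ := main_ind m d m (le_refl m)
  rw [Nat.sub_self, cnt_zero] at h1 h2
  refine ⟨h2, ?_⟩
  rw [h1]
  simp
end

section
/- The manifest all-zeros declassifier is sound: the non-early-exiting loop allz := 1; for i = m−1 down to 0: allz := allz * (if d[i] ≠ 0 then 0 else 1) has a transcript determined by m alone, and hence low-equal final stores (which include m) imply equal transcripts; moreover its final value of allz is 1 iff d is all zero. -/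
/-- Transcript of the non-early-exiting all-zeros loop: `m` ones followed by a
zero, independent of the key. -/
def azManifestTranscript (m : ℕ) : List Bool :=
  List.replicate m true ++ [false]

/-- Final value of `allz` computed by the loop
`allz := 1; for i = m−1 down to 0: allz := allz * (if d[i] ≠ 0 then 0 else 1)`. -/
def azFinal {m : ℕ} (d : Fin m → ℤ) : ℤ :=
  (List.ofFn fun i : Fin m => d i.rev).foldl
    (fun a x => a * (if x ≠ 0 then 0 else 1)) 1

lemma azFoldl (l : List ℤ) (a : ℤ) :
    l.foldl (fun a x => a * (if x ≠ 0 then 0 else 1)) a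
      = a * (if ∀ x ∈ l, x = 0 then 1 else 0) := by
  induction l generalizing a with
  | nil => simp
  | cons y t ih =>
    simp only [List.foldl_cons, ih]
    by_cases hy : y = 0 <;> simp [hy, mul_assoc]

/-- The manifest all-zeros declassifier is sound: the transcript is determined
by `m` alone (so low-equal final stores, which include `m`, imply equal
transcripts), and the final `allz` is `1` iff `d` is all zero. -/
theorem allzeros_manifest_sound (m m' : ℕ) (d : Fin m → ℤ) (d' : Fin m' → ℤ)
    (hm : m = m') :
    azManifestTranscript m = azManifestTranscript m' ∧
    (azFinal d = 1 ↔ ∀ i, d i = 0) := by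
  subst hm
  refine ⟨rfl, ?_⟩
  rw [azFinal, azFoldl]
  have key : (∀ x ∈ List.ofFn fun i : Fin m => d i.rev, x = 0) ↔ ∀ i, d i = 0 := by
    simp only [List.mem_ofFn, Set.mem_range, forall_exists_index, forall_apply_eq_imp_iff]
    constructor
    · intro h i; have := h i.rev; simpa using this
    · intro h i; exact h _
  by_cases h : ∀ i, d i = 0
  · simp [key, h]
  · push_neg at h
    obtain ⟨i, hi⟩ := h
    have : ¬ ∀ j : Fin m, d j = 0 := fun h' => hi (h' i)
    simp [key, this, hi]
    exact ⟨i.rev, by simpa using hi⟩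
end
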